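/- Let t_1, …, t_n be complex numbers with t_i ≠ 0 for all i and t_i² ≠ t_j² for all i ≠ j, and let V ∈ ℂ[z_1,…,z_n] be a symmetric polynomial. Then the n-fold iterated residue at infinity Res_{z=∞} of V(z_1,…,z_n) · ∏_{1≤i<j≤n} (z_j − z_i) / [ ∏_{i=1}^{n} (t_i − z_i)(t_i + z_i) · ∏_{1≤i<j≤n} (t_i + t_j)(t_j − t_i) ] equals ∑_{ε ∈ {±1}^n} V(ε_1 t_1, …, ε_n t_n) / ∏_{1≤i≤j≤n} (ε_i t_i + ε_j t_j), where for i = j the factor in the denominator is 2ε_i t_i. (This is Formula 2, the first residue formula for ∫_{LG(n)} φ(R); the right-hand side is the Berline–Vergne fixed-point sum over the 2^n fixed points of the torus action on the Lagrangian Grassmannian.) -/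

import Mathlib

/-- The iterated circle integral `∮_{|z_n|=R n} ⋯ ∮_{|z_1|=R 1} f dz_1⋯dz_n`,
with each circle centered at `0` and traversed counterclockwise; the innermost
integral is over the first variable, the outermost over the last. -/
noncomputable def iterCircleIntegral : (n : ℕ) → ((Fin n → ℂ) → ℂ) → (Fin n → ℝ) → ℂ
  | 0, f, _ => f Fin.elim0
  | n + 1, f, R =>
      ∮ z in C(0, R (Fin.last n)),
        iterCircleIntegral n (fun w => f (Fin.snoc w z)) (fun i => R i.castSucc)

/-- The iterated residue at infinity
`Res_{z=∞} f := (−1)ⁿ (2πi)⁻ⁿ ∮_{|z_n|=R n} ⋯ ∮_{|z_1|=R 1} f dz_1⋯dz_n`. -/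
noncomputable def iterResInfty (n : ℕ) (f : (Fin n → ℂ) → ℂ) (R : Fin n → ℝ) : ℂ :=
  (-1) ^ n * ((2 * (Real.pi : ℂ) * Complex.I) ^ n)⁻¹ * iterCircleIntegral n f R


open Complex Finset Metric

section Aux

lemma circleIntegral_add' {f g : ℂ → ℂ} {c : ℂ} {R : ℝ} (hf : CircleIntegrable f c R)
    (hg : CircleIntegrable g c R) :
    (∮ z in C(c, R), (f z + g z)) = (∮ z in C(c, R), f z) + ∮ z in C(c, R), g z := by
  simp only [circleIntegral, smul_add, intervalIntegral.integral_add hf.out hg.out]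

lemma circleIntegrable_sum {ι : Type*} (s : Finset ι) {f : ι → ℂ → ℂ} {c : ℂ} {R : ℝ}
    (h : ∀ i ∈ s, CircleIntegrable (f i) c R) :
    CircleIntegrable (fun z => ∑ i ∈ s, f i z) c R := by
  classical
  induction s using Finset.cons_induction with
  | empty => simpa using circleIntegrable_const (0 : ℂ) c R
  | cons a s ha ih =>
    simp only [Finset.sum_cons]
    exact (h a (Finset.mem_cons_self a s)).add (ih fun i hi => h i (Finset.mem_cons_of_mem hi))

lemma circleIntegral_finset_sum {ι : Type*} (s : Finset ι) {f : ι → ℂ → ℂ} {c : ℂ} {R : ℝ}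
    (h : ∀ i ∈ s, CircleIntegrable (f i) c R) :
    (∮ z in C(c, R), ∑ i ∈ s, f i z) = ∑ i ∈ s, ∮ z in C(c, R), f i z := by
  classical
  induction s using Finset.cons_induction with
  | empty => simp [circleIntegral]
  | cons a s ha ih =>
    simp only [Finset.sum_cons]
    rw [circleIntegral_add' (h a (Finset.mem_cons_self a s))
        (circleIntegrable_sum s fun i hi => h i (Finset.mem_cons_of_mem hi)),
      ih fun i hi => h i (Finset.mem_cons_of_mem hi)]

lemma oneVar (p : Polynomial ℂ) (t : ℂ) (ht : t ≠ 0) (R : ℝ) (hR : ‖t‖ < R) :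
    (∮ z in C(0, R), p.eval z / ((t - z) * (t + z))) =
      ∑ ε : ℤˣ, (-(2 * ↑Real.pi * I)) * p.eval (((ε : ℤ) : ℂ) * t) / (2 * ((ε : ℤ) : ℂ) * t) := by
  have hR0 : (0:ℝ) ≤ R := le_trans (norm_nonneg t) hR.le
  have hmem : ∀ (s : ℂ), ‖s‖ = ‖t‖ → s ∈ ball (0:ℂ) R := by
    intro s hs; simpa [mem_ball, Complex.dist_eq, hs] using hR
  have hcongr : (∮ z in C(0, R), p.eval z / ((t - z) * (t + z))) =
      ∮ z in C(0, R), ((2*t)⁻¹ * ((z - (-t))⁻¹ * p.eval z) - (2*t)⁻¹ * ((z - t)⁻¹ * p.eval z)) := by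
    refine circleIntegral.integral_congr hR0 fun z hz => ?_
    have hz' : ‖z‖ = R := by simpa [Complex.dist_eq] using hz
    have h1' : z - t ≠ 0 := by
      intro h; rw [sub_eq_zero] at h; rw [h] at hz'; exact absurd hz' (ne_of_lt hR)
    have h2' : z - -t ≠ 0 := by
      intro h; rw [sub_eq_zero] at h; rw [h] at hz'; simp at hz'; exact absurd hz' (ne_of_lt hR)
    have h1 : t - z ≠ 0 := fun h => h1' (by linear_combination -h)
    have h2 : t + z ≠ 0 := fun h => h2' (by linear_combination h)
    have hprodA : z * t * 2 + t ^ 2 * 2 ≠ 0 := by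
      have he : z * t * 2 + t ^ 2 * 2 = (2 * t) * (t + z) := by ring
      rw [he]; exact mul_ne_zero (mul_ne_zero two_ne_zero ht) h2
    have hprodB : t * z * 2 + t ^ 2 * 2 ≠ 0 := by
      have he : t * z * 2 + t ^ 2 * 2 = (2 * t) * (t + z) := by ring
      rw [he]; exact mul_ne_zero (mul_ne_zero two_ne_zero ht) h2
    field_simp
    ring
  rw [hcongr]
  have hint : ∀ w : ℂ, w ∈ ball (0:ℂ) R →
      CircleIntegrable (fun z => (2*t)⁻¹ * ((z - w)⁻¹ * p.eval z)) 0 R := by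
    intro w hw
    apply ContinuousOn.circleIntegrable hR0
    apply ContinuousOn.mul continuousOn_const
    apply ContinuousOn.mul
    · apply ContinuousOn.inv₀ (by fun_prop)
      intro z hz
      have hz' : ‖z‖ = R := by simpa [Complex.dist_eq] using hz
      have hw' : ‖w‖ < R := by simpa [mem_ball, Complex.dist_eq] using hw
      intro h
      rw [sub_eq_zero] at h
      rw [← h, hz'] at hw'
      exact lt_irrefl _ hw'
    · exact (Polynomial.continuous p).continuousOn
  have hmt : (-t) ∈ ball (0:ℂ) R := hmem _ (by simp)
  have hpt : t ∈ ball (0:ℂ) R := hmem _ rfl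
  rw [circleIntegral.integral_sub (hint _ hmt) (hint _ hpt)]
  have cauchy : ∀ w : ℂ, w ∈ ball (0:ℂ) R →
      (∮ z in C(0, R), (z - w)⁻¹ * p.eval z) = (2 * ↑Real.pi * I) * p.eval w := by
    intro w hw
    have hd : DifferentiableOn ℂ (fun z => p.eval z) (closedBall (0:ℂ) R) :=
      (Polynomial.differentiable p).differentiableOn
    simpa [smul_eq_mul] using hd.circleIntegral_sub_inv_smul hw
  rw [circleIntegral.integral_const_mul, circleIntegral.integral_const_mul,
    cauchy _ hmt, cauchy _ hpt]
  rw [show (Finset.univ : Finset ℤˣ) = {1, -1} by decide,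
    Finset.sum_insert (by decide), Finset.sum_singleton]
  simp only [Units.val_one, Units.val_neg, Int.cast_one, Int.cast_neg, one_mul, neg_mul, mul_neg,
    neg_neg, mul_one]
  field_simp
  ring

lemma iterCircleIntegral_const_mul :
    ∀ (n : ℕ) (c : ℂ) (f : (Fin n → ℂ) → ℂ) (R : Fin n → ℝ),
      iterCircleIntegral n (fun z => c * f z) R = c * iterCircleIntegral n f R
  | 0, c, f, R => rfl
  | n + 1, c, f, R => by
    simp only [iterCircleIntegral]
    have h : (fun z => iterCircleIntegral n (fun w => c * f (Fin.snoc w z)) fun i => R i.castSucc)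
        = fun z => c * iterCircleIntegral n (fun w => f (Fin.snoc w z)) fun i => R i.castSucc :=
      funext fun z => iterCircleIntegral_const_mul n c _ _
    rw [show (∮ z in C(0, R (Fin.last n)),
          iterCircleIntegral n (fun w => c * f (Fin.snoc w z)) fun i => R i.castSucc)
        = ∮ z in C(0, R (Fin.last n)),
          c * iterCircleIntegral n (fun w => f (Fin.snoc w z)) fun i => R i.castSucc
        from congrArg (circleIntegral · 0 (R (Fin.last n))) h,
      circleIntegral.integral_const_mul]

lemma evalCommute {σ : Type*} (r : Polynomial (MvPolynomial σ ℂ)) (a : σ → ℂ) (z : ℂ) :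
    MvPolynomial.eval a (Polynomial.eval (MvPolynomial.C z) r)
      = Polynomial.eval z (r.map (MvPolynomial.eval a)) := by
  rw [Polynomial.eval_map]
  have h : Polynomial.eval (MvPolynomial.C z) r
      = Polynomial.eval₂ (RingHom.id _) (MvPolynomial.C z) r := rfl
  rw [h, Polynomial.hom_eval₂]
  simp

/-- The polynomial obtained from `P` by separating out the last variable. -/
noncomputable def rAux (n : ℕ) (P : MvPolynomial (Fin (n + 1)) ℂ) :
    Polynomial (MvPolynomial (Fin n) ℂ) :=
  (MvPolynomial.finSuccEquiv ℂ n (MvPolynomial.rename Fin.rev P)).map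
    (MvPolynomial.rename (Fin.rev : Fin n → Fin n)).toRingHom

lemma snoc_eval {n : ℕ} (P : MvPolynomial (Fin (n + 1)) ℂ) (w : Fin n → ℂ) (z : ℂ) :
    MvPolynomial.eval (Fin.snoc w z) P =
      MvPolynomial.eval w (Polynomial.eval (MvPolynomial.C z) (rAux n P)) := by
  rw [rAux]
  have h1 : (Fin.snoc w z : Fin (n + 1) → ℂ) = (Fin.cons z (w ∘ Fin.rev)) ∘ Fin.rev := by
    funext i
    refine Fin.lastCases ?_ (fun j => ?_) i
    · simp [Fin.rev_last]
    · simp [Fin.rev_castSucc, Function.comp, Fin.rev_rev]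
  rw [evalCommute, Polynomial.map_map]
  have h2 : (MvPolynomial.eval w).comp (MvPolynomial.rename (Fin.rev : Fin n → Fin n)).toRingHom
      = MvPolynomial.eval (w ∘ Fin.rev) :=
    RingHom.ext fun p => by simp [MvPolynomial.eval_rename]
  rw [h2, ← MvPolynomial.eval_eq_eval_mv_eval', MvPolynomial.eval_rename, ← h1]

lemma keyA : ∀ (n : ℕ) (t : Fin n → ℂ), (∀ i, t i ≠ 0) → ∀ (R : Fin n → ℝ),
    (∀ j i, ‖t i‖ < R j) → ∀ (P : MvPolynomial (Fin n) ℂ),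
    iterCircleIntegral n (fun z => MvPolynomial.eval z P / ∏ i, ((t i - z i) * (t i + z i))) R =
      ∑ ε : Fin n → ℤˣ, (-(2 * ↑Real.pi * I)) ^ n *
        MvPolynomial.eval (fun i => ((ε i : ℤ) : ℂ) * t i) P / ∏ i, (2 * ((ε i : ℤ) : ℂ) * t i)
  | 0 => by
    intro t ht0 R hR P
    simp only [iterCircleIntegral, Finset.univ_eq_empty, Finset.prod_empty, div_one, pow_zero,
      one_mul]
    rw [Fintype.sum_unique]
    exact congrArg (fun g : Fin 0 → ℂ => MvPolynomial.eval g P) (Subsingleton.elim _ _)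
  | (n + 1) => by
    intro t ht0 R hR P
    have htL : t (Fin.last n) ≠ 0 := ht0 _
    have hRL : ‖t (Fin.last n)‖ < R (Fin.last n) := hR _ _
    have hR0 : (0:ℝ) ≤ R (Fin.last n) := le_trans (norm_nonneg _) hRL.le
    set p : (Fin n → ℤˣ) → Polynomial ℂ := fun ε =>
      (rAux n P).map (MvPolynomial.eval (fun i => ((ε i : ℤ) : ℂ) * t i.castSucc)) with hp
    set d : (Fin n → ℤˣ) → ℂ := fun ε => ∏ i, (2 * ((ε i : ℤ) : ℂ) * t i.castSucc) with hd
    have hInner : ∀ z : ℂ,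
        iterCircleIntegral n
          (fun w => MvPolynomial.eval (Fin.snoc w z) P /
            ∏ i : Fin (n + 1), ((t i - (Fin.snoc w z : Fin (n + 1) → ℂ) i) *
              (t i + (Fin.snoc w z : Fin (n + 1) → ℂ) i)))
          (fun i => R i.castSucc)
        = ∑ ε : Fin n → ℤˣ, ((-(2 * ↑Real.pi * I)) ^ n / d ε) *
            (Polynomial.eval z (p ε) / ((t (Fin.last n) - z) * (t (Fin.last n) + z))) := by
      intro z
      have hfun : (fun w : Fin n → ℂ => MvPolynomial.eval (Fin.snoc w z) P /
            ∏ i : Fin (n + 1), ((t i - (Fin.snoc w z : Fin (n + 1) → ℂ) i) *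
              (t i + (Fin.snoc w z : Fin (n + 1) → ℂ) i)))
          = fun w => ((t (Fin.last n) - z) * (t (Fin.last n) + z))⁻¹ *
              (MvPolynomial.eval w (Polynomial.eval (MvPolynomial.C z) (rAux n P)) /
                ∏ i : Fin n, ((t i.castSucc - w i) * (t i.castSucc + w i))) := by
        funext w
        rw [snoc_eval, Fin.prod_univ_castSucc]
        simp only [Fin.snoc_castSucc, Fin.snoc_last]
        rw [div_mul_eq_div_div, div_eq_inv_mul]
      rw [hfun, iterCircleIntegral_const_mul,
        keyA n (fun i => t i.castSucc) (fun i => ht0 _) (fun i => R i.castSucc)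
          (fun j i => hR _ _) (Polynomial.eval (MvPolynomial.C z) (rAux n P)),
        Finset.mul_sum]
      refine Finset.sum_congr rfl fun ε _ => ?_
      rw [evalCommute, hp, hd]
      ring
    simp only [iterCircleIntegral]
    simp only [hInner]
    have hsph : ∀ z ∈ sphere (0:ℂ) (R (Fin.last n)),
        (t (Fin.last n) - z) * (t (Fin.last n) + z) ≠ 0 := by
      intro z hz
      have hz' : ‖z‖ = R (Fin.last n) := by simpa [Complex.dist_eq] using hz
      apply mul_ne_zero
      · intro h; rw [sub_eq_zero] at h; rw [← h] at hz'; exact absurd hz' (ne_of_lt hRL)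
      · intro h
        have : z = -(t (Fin.last n)) := by linear_combination h
        rw [this] at hz'; simp at hz'; exact absurd hz' (ne_of_lt hRL)
    have hint : ∀ ε : Fin n → ℤˣ, CircleIntegrable
        (fun z => ((-(2 * ↑Real.pi * I)) ^ n / d ε) *
          (Polynomial.eval z (p ε) / ((t (Fin.last n) - z) * (t (Fin.last n) + z))))
        0 (R (Fin.last n)) := by
      intro ε
      apply ContinuousOn.circleIntegrable hR0
      refine ContinuousOn.mul continuousOn_const (ContinuousOn.div
        (Polynomial.continuous (p ε)).continuousOn (by fun_prop) hsph)
    rw [circleIntegral_finset_sum Finset.univ fun ε _ => hint ε]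
    simp only [circleIntegral.integral_const_mul]
    have hone : ∀ ε : Fin n → ℤˣ,
        (∮ z in C(0, R (Fin.last n)),
            Polynomial.eval z (p ε) / ((t (Fin.last n) - z) * (t (Fin.last n) + z)))
          = ∑ e : ℤˣ, (-(2 * ↑Real.pi * I)) * Polynomial.eval (((e : ℤ) : ℂ) * t (Fin.last n)) (p ε)
              / (2 * ((e : ℤ) : ℂ) * t (Fin.last n)) :=
      fun ε => oneVar (p ε) _ htL _ hRL
    simp only [hone]
    conv_rhs => rw [← Equiv.sum_comp (Fin.snocEquiv (fun _ : Fin (n + 1) => ℤˣ)),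
      Fintype.sum_prod_type]
    rw [Finset.sum_comm]
    refine Finset.sum_congr rfl fun ε _ => ?_
    rw [Finset.mul_sum]
    refine Finset.sum_congr rfl fun e _ => ?_
    have harg : (fun i : Fin (n + 1) => ((((Fin.snocEquiv fun _ => ℤˣ) (e, ε)) i : ℤ) : ℂ) * t i)
        = Fin.snoc (fun i : Fin n => ((ε i : ℤ) : ℂ) * t i.castSucc)
            (((e : ℤ) : ℂ) * t (Fin.last n)) := by
      funext i
      refine Fin.lastCases ?_ (fun j => ?_) i <;>
        simp [Fin.snocEquiv, Fin.snoc_last, Fin.snoc_castSucc]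
    have hev : (MvPolynomial.eval fun i =>
          ((((Fin.snocEquiv fun _ => ℤˣ) (e, ε)) i : ℤ) : ℂ) * t i) P
        = Polynomial.eval (((e : ℤ) : ℂ) * t (Fin.last n)) (p ε) := by
      rw [harg, snoc_eval, evalCommute, hp]
    have hprod : (∏ i : Fin (n + 1), 2 * ((((Fin.snocEquiv fun _ => ℤˣ) (e, ε)) i : ℤ) : ℂ) * t i)
        = d ε * (2 * ((e : ℤ) : ℂ) * t (Fin.last n)) := by
      rw [Fin.prod_univ_castSucc]
      simp [hd, Fin.snocEquiv, Fin.snoc_last, Fin.snoc_castSucc]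
    rw [hev, hprod, pow_succ]
    ring

end Aux

lemma unit_sq (u : ℤˣ) : ((u : ℤ) : ℂ) * ((u : ℤ) : ℂ) = 1 := by
  rcases Int.units_eq_one_or u with h | h <;> simp [h]

lemma unit_ne_zero (u : ℤˣ) : ((u : ℤ) : ℂ) ≠ 0 := by
  rcases Int.units_eq_one_or u with h | h <;> simp [h]

/-- Formula 2, first residue formula for `∫_{LG(n)} φ(𝓡)`:
for `t_i ≠ 0`, `t_i² ≠ t_j²` (`i ≠ j`) and `V` symmetric, the `n`-fold iterated
residue at infinity of
`V(z) ∏_{i<j}(z_j−z_i) / [∏_i (t_i−z_i)(t_i+z_i) · ∏_{i<j}(t_i+t_j)(t_j−t_i)]`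
equals `∑_{ε∈{±1}ⁿ} V(ε₁t₁,…,ε_n t_n) / ∏_{i≤j}(ε_i t_i + ε_j t_j)`
(the `i = j` factor being `2ε_i t_i`). Signs `±1` are modelled by `ℤˣ`. -/
theorem lagrangian_residue_formula_v1 (n : ℕ) (t : Fin n → ℂ)
    (ht0 : ∀ i, t i ≠ 0) (ht2 : ∀ i j, i ≠ j → t i ^ 2 ≠ t j ^ 2)
    (V : MvPolynomial (Fin n) ℂ) (hV : V.IsSymmetric)
    (R : Fin n → ℝ) (hR : ∀ j i, ‖t i‖ < R j) :
    iterResInfty n (fun z =>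
        MvPolynomial.eval z V *
          (∏ p ∈ Finset.univ.filter (fun p : Fin n × Fin n => p.1 < p.2),
            (z p.2 - z p.1)) /
          ((∏ i : Fin n, ((t i - z i) * (t i + z i))) *
            ∏ p ∈ Finset.univ.filter (fun p : Fin n × Fin n => p.1 < p.2),
              ((t p.1 + t p.2) * (t p.2 - t p.1)))) R =
      ∑ ε : Fin n → ℤˣ,
        MvPolynomial.eval (fun i => ((ε i : ℤ) : ℂ) * t i) V /
          ∏ p ∈ Finset.univ.filter (fun p : Fin n × Fin n => p.1 ≤ p.2),
            (((ε p.1 : ℤ) : ℂ) * t p.1 + ((ε p.2 : ℤ) : ℂ) * t p.2) := by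

  classical
  set Cst : ℂ := ∏ p ∈ Finset.univ.filter (fun p : Fin n × Fin n => p.1 < p.2),
      ((t p.1 + t p.2) * (t p.2 - t p.1)) with hCst
  set P : MvPolynomial (Fin n) ℂ :=
    V * ∏ p ∈ Finset.univ.filter (fun p : Fin n × Fin n => p.1 < p.2),
      (MvPolynomial.X p.2 - MvPolynomial.X p.1) with hP
  have hevalP : ∀ z : Fin n → ℂ, MvPolynomial.eval z P = MvPolynomial.eval z V *
      ∏ p ∈ Finset.univ.filter (fun p : Fin n × Fin n => p.1 < p.2), (z p.2 - z p.1) := by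
    intro z
    simp [hP, MvPolynomial.eval_prod]
  have hfun : (fun z : Fin n → ℂ =>
        MvPolynomial.eval z V *
          (∏ p ∈ Finset.univ.filter (fun p : Fin n × Fin n => p.1 < p.2),
            (z p.2 - z p.1)) /
          ((∏ i : Fin n, ((t i - z i) * (t i + z i))) * Cst))
      = fun z => Cst⁻¹ *
          (MvPolynomial.eval z P / ∏ i : Fin n, ((t i - z i) * (t i + z i))) := by
    funext z
    rw [hevalP, div_mul_eq_div_div, div_eq_inv_mul]
  rw [iterResInfty, hfun, iterCircleIntegral_const_mul, keyA n t ht0 R hR P,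
    Finset.mul_sum, Finset.mul_sum]
  -- nonvanishing facts
  have hC0 : Cst ≠ 0 := by
    rw [hCst]
    rw [Finset.prod_ne_zero_iff]
    intro q hq
    have hlt : q.1 < q.2 := (Finset.mem_filter.mp hq).2
    intro h
    exact ht2 q.1 q.2 (ne_of_lt hlt) (by linear_combination -h)
  refine Finset.sum_congr rfl fun ε _ => ?_
  -- split the ≤-product on the RHS
  have hsplit : (Finset.univ.filter fun p : Fin n × Fin n => p.1 ≤ p.2)
      = (Finset.univ.filter fun p : Fin n × Fin n => p.1 < p.2) ∪ Finset.univ.diag := by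
    ext q
    simp [Finset.mem_diag, le_iff_lt_or_eq]
  have hdisj : Disjoint (Finset.univ.filter fun p : Fin n × Fin n => p.1 < p.2)
      (Finset.univ.diag : Finset (Fin n × Fin n)) := by
    rw [Finset.disjoint_left]
    intro a ha hb
    have h1 : a.1 < a.2 := (Finset.mem_filter.mp ha).2
    have h2 : a.1 = a.2 := (Finset.mem_diag.mp hb).2
    exact absurd h1 (h2 ▸ lt_irrefl _)
  rw [hsplit, Finset.prod_union hdisj, Finset.prod_diag]
  set S : ℂ := ∏ p ∈ Finset.univ.filter (fun p : Fin n × Fin n => p.1 < p.2),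
      (((ε p.1 : ℤ) : ℂ) * t p.1 + ((ε p.2 : ℤ) : ℂ) * t p.2) with hS
  set W : ℂ := ∏ p ∈ Finset.univ.filter (fun p : Fin n × Fin n => p.1 < p.2),
      ((((ε p.2 : ℤ) : ℂ) * t p.2 - ((ε p.1 : ℤ) : ℂ) * t p.1)) with hW
  set Dd : ℂ := ∏ i : Fin n, (((ε i : ℤ) : ℂ) * t i + ((ε i : ℤ) : ℂ) * t i) with hDd
  have hS0 : S ≠ 0 := by
    rw [hS, Finset.prod_ne_zero_iff]
    intro q hq
    have hlt : q.1 < q.2 := (Finset.mem_filter.mp hq).2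
    intro h
    refine ht2 q.1 q.2 (ne_of_lt hlt) ?_
    linear_combination (((ε q.1 : ℤ) : ℂ) * t q.1 - ((ε q.2 : ℤ) : ℂ) * t q.2) * h
      - (t q.1) ^ 2 * unit_sq (ε q.1) + (t q.2) ^ 2 * unit_sq (ε q.2)
  have hDd0 : Dd ≠ 0 := by
    rw [hDd, Finset.prod_ne_zero_iff]
    intro i _
    have h2 : ((ε i : ℤ) : ℂ) * t i + ((ε i : ℤ) : ℂ) * t i
        = 2 * (((ε i : ℤ) : ℂ) * t i) := by ring
    rw [h2]
    exact mul_ne_zero two_ne_zero (mul_ne_zero (unit_ne_zero _) (ht0 i))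
  have hWS : S * W = Cst := by
    rw [hS, hW, hCst, ← Finset.prod_mul_distrib]
    refine Finset.prod_congr rfl fun q hq => ?_
    linear_combination (t q.2) ^ 2 * unit_sq (ε q.2) - (t q.1) ^ 2 * unit_sq (ε q.1)
  have hdd : (∏ i : Fin n, (2 * ((ε i : ℤ) : ℂ) * t i)) = Dd := by
    rw [hDd]
    exact Finset.prod_congr rfl fun i _ => by ring
  have hA : MvPolynomial.eval (fun i => ((ε i : ℤ) : ℂ) * t i) P
      = MvPolynomial.eval (fun i => ((ε i : ℤ) : ℂ) * t i) V * W := by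
    rw [hevalP, hW]
  have hpre : ((-1 : ℂ)) ^ n * (((2 * ↑Real.pi * I) ^ n)⁻¹) * (-(2 * ↑Real.pi * I)) ^ n = 1 := by
    have hx : ((2 : ℂ) * ↑Real.pi * I) ^ n ≠ 0 := pow_ne_zero _ Complex.two_pi_I_ne_zero
    have h1 : (-(2 * ↑Real.pi * I) : ℂ) ^ n = (-1 : ℂ) ^ n * (2 * ↑Real.pi * I) ^ n :=
      neg_pow _ _
    rw [h1]
    rw [show (-1 : ℂ) ^ n * ((2 * ↑Real.pi * I) ^ n)⁻¹ * ((-1 : ℂ) ^ n * (2 * ↑Real.pi * I) ^ n)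
        = ((-1 : ℂ) ^ n * (-1 : ℂ) ^ n) * (((2 * ↑Real.pi * I) ^ n)⁻¹ * (2 * ↑Real.pi * I) ^ n)
        from by ring,
      ← mul_pow, inv_mul_cancel₀ hx]
    norm_num
  have harr : (-1 : ℂ) ^ n * ((2 * ↑Real.pi * I) ^ n)⁻¹ *
        (Cst⁻¹ * ((-(2 * ↑Real.pi * I)) ^ n *
          MvPolynomial.eval (fun i => ((ε i : ℤ) : ℂ) * t i) P /
            ∏ i : Fin n, (2 * ((ε i : ℤ) : ℂ) * t i)))
      = ((-1 : ℂ) ^ n * ((2 * ↑Real.pi * I) ^ n)⁻¹ * (-(2 * ↑Real.pi * I)) ^ n) *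
          (MvPolynomial.eval (fun i => ((ε i : ℤ) : ℂ) * t i) P /
            (Cst * ∏ i : Fin n, (2 * ((ε i : ℤ) : ℂ) * t i))) := by
    ring
  rw [harr, hpre, one_mul, hdd, hA,
    div_eq_div_iff (mul_ne_zero hC0 hDd0) (mul_ne_zero hS0 hDd0)]
  linear_combination MvPolynomial.eval (fun i => ((ε i : ℤ) : ℂ) * t i) V * Dd * hWS
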